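/- arXiv:2401.12095 — 6 statements merged into one kernel-verified Lean document; each statement's English description precedes it below -/
import Mathlib

section
/- Let b(z) = ∑_{j=−m}^{k} b_j z^j be a Laurent polynomial with b_{−m} b_k ≠ 0 and max(m,k) ≥ 2. If |b_1| ≥ |b_{−1}| + ∑_{j=2}^{k} j|b_j| + ∑_{j=2}^{m} j|b_{−j}|, then b restricted to the unit circle is injective (i.e., b(𝕋) is a Jordan curve). -/
open Finset Complex

lemma aux_geom_le (ζ η : ℂ) (hζ : ‖ζ‖ = 1) (hη : ‖η‖ = 1) (n : ℕ) :
    ‖∑ i ∈ range n, ζ ^ i * η ^ (n - 1 - i)‖ ≤ n := by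
  refine le_trans (norm_sum_le _ _) ?_
  have : ∀ i ∈ range n, ‖ζ ^ i * η ^ (n - 1 - i)‖ = 1 := by
    intro i _; simp [norm_mul, norm_pow, hζ, hη]
  rw [Finset.sum_congr rfl this]
  simp

lemma aux_pow_le (ζ η : ℂ) (hζ : ‖ζ‖ = 1) (hη : ‖η‖ = 1) (n : ℕ) :
    ‖ζ ^ n - η ^ n‖ ≤ n * ‖ζ - η‖ := by
  rw [← geom_sum₂_mul, norm_mul]
  exact mul_le_mul_of_nonneg_right (aux_geom_le ζ η hζ hη n) (norm_nonneg _)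

lemma aux_pow_lt (ζ η : ℂ) (hζ : ‖ζ‖ = 1) (hη : ‖η‖ = 1)
    (hne : ζ ≠ η) (n : ℕ) (hn : 2 ≤ n) :
    ‖ζ ^ n - η ^ n‖ < n * ‖ζ - η‖ := by
  have hd : 0 < ‖ζ - η‖ := by
    exact norm_pos_iff.2 (sub_ne_zero.2 hne)
  rw [← geom_sum₂_mul, norm_mul]
  refine mul_lt_mul_of_pos_right ?_ hd
  have hη0 : η ≠ 0 := by intro h; rw [h] at hη; simp at hη
  set t0 : ℂ := η ^ (n - 1) with ht0
  set t1 : ℂ := ζ * η ^ (n - 2) with ht1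
  have hsplit : ∑ i ∈ range n, ζ ^ i * η ^ (n - 1 - i)
      = (t0 + t1) + ∑ i ∈ Finset.Ico 2 n, ζ ^ i * η ^ (n - 1 - i) := by
    rw [Finset.range_eq_Ico, ← Finset.sum_Ico_consecutive _ (by omega : (0:ℕ) ≤ 2) hn]
    congr 1
    rw [show Finset.Ico 0 2 = ({0, 1} : Finset ℕ) by decide]
    simp [ht0, ht1, show n-1-1 = n-2 from by omega]
  have ht01 : t0 ≠ t1 := by
    intro h
    have he : η * η ^ (n - 2) = ζ * η ^ (n - 2) := by
      rw [← pow_succ', show n - 2 + 1 = n - 1 by omega]; exact h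
    exact hne ((mul_right_cancel₀ (pow_ne_zero _ hη0) he).symm)
  have habs01 : ‖t0 + t1‖ < 2 := by
    have hn0 : ‖t0‖ = 1 := by simp [ht0, norm_pow, hη]
    have hn1 : ‖t1‖ = 1 := by
      simp [ht1, norm_mul, norm_pow, hζ, hη]
    have hns : ¬ SameRay ℝ t0 t1 := fun h => ht01 (h.eq_of_norm_eq (hn0.trans hn1.symm))
    have := norm_add_lt_of_not_sameRay hns
    rw [hn0, hn1] at this
    calc ‖t0 + t1‖ = ‖t0 + t1‖ := rfl
    _ < 1 + 1 := this
    _ = 2 := by norm_num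
  rw [hsplit]
  calc ‖(t0 + t1) + ∑ i ∈ Finset.Ico 2 n, ζ ^ i * η ^ (n - 1 - i)‖
      ≤ ‖t0 + t1‖ + ‖∑ i ∈ Finset.Ico 2 n, ζ ^ i * η ^ (n - 1 - i)‖ :=
        norm_add_le _ _
    _ ≤ ‖t0 + t1‖ + (n - 2 : ℕ) := by
        gcongr
        refine le_trans (norm_sum_le _ _) ?_
        have : ∀ i ∈ Finset.Ico 2 n, ‖ζ ^ i * η ^ (n - 1 - i)‖ = 1 := by
          intro i _; simp [norm_mul, norm_pow, hζ, hη]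
        rw [Finset.sum_congr rfl this]
        simp
    _ < 2 + (n - 2 : ℕ) := by linarith
    _ = n := by push_cast [Nat.cast_sub hn]; ring

lemma aux_zpow_neg_eq (ζ η : ℂ) (hζ : ‖ζ‖ = 1) (hη : ‖η‖ = 1) (n : ℕ) :
    ‖ζ ^ (-(n : ℤ)) - η ^ (-(n : ℤ))‖ = ‖ζ ^ n - η ^ n‖ := by
  have hζ0 : ζ ≠ 0 := by intro h; rw [h] at hζ; simp at hζ
  have hη0 : η ≠ 0 := by intro h; rw [h] at hη; simp at hη
  have hrw : ζ ^ (-(n : ℤ)) - η ^ (-(n : ℤ)) = (η ^ n - ζ ^ n) / (ζ ^ n * η ^ n) := by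
    rw [zpow_neg, zpow_neg, zpow_natCast, zpow_natCast]
    field_simp
  rw [hrw, norm_div, norm_mul, norm_pow, norm_pow, hζ, hη, norm_sub_rev]
  simp

lemma aux_zpow_le (ζ η : ℂ) (hζ : ‖ζ‖ = 1) (hη : ‖η‖ = 1) (j : ℤ) :
    ‖ζ ^ j - η ^ j‖ ≤ (|j| : ℝ) * ‖ζ - η‖ := by
  obtain ⟨n, rfl | rfl⟩ := j.eq_nat_or_neg
  · rw [zpow_natCast, zpow_natCast]
    simpa [Int.abs_natCast] using aux_pow_le ζ η hζ hη n
  · rw [aux_zpow_neg_eq ζ η hζ hη n]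
    simpa [Int.abs_natCast] using aux_pow_le ζ η hζ hη n

lemma aux_zpow_lt (ζ η : ℂ) (hζ : ‖ζ‖ = 1) (hη : ‖η‖ = 1)
    (hne : ζ ≠ η) (j : ℤ) (hj : 2 ≤ |j|) :
    ‖ζ ^ j - η ^ j‖ < (|j| : ℝ) * ‖ζ - η‖ := by
  obtain ⟨n, rfl | rfl⟩ := j.eq_nat_or_neg
  · rw [zpow_natCast, zpow_natCast]
    have hn : 2 ≤ n := by exact_mod_cast (by simpa [Int.abs_natCast] using hj : (2:ℤ) ≤ n)
    simpa [Int.abs_natCast] using aux_pow_lt ζ η hζ hη hne n hn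
  · rw [aux_zpow_neg_eq ζ η hζ hη n]
    have hn : 2 ≤ n := by
      have : (2:ℤ) ≤ n := by simpa [Int.abs_natCast] using hj
      exact_mod_cast this
    simpa [Int.abs_natCast] using aux_pow_lt ζ η hζ hη hne n hn

/-- Sufficient coefficient condition for a Laurent polynomial to be injective on the
unit circle (Jordan curve, no self-intersections). -/
theorem laurent_jordan_of_coeff (m k : ℕ) (hm : 1 ≤ m) (hk : 1 ≤ k)
    (hmk : 2 ≤ max m k) (b : ℤ → ℂ) (hb : b (-(m : ℤ)) * b k ≠ 0)
    (hcoef : ‖b (-1)‖ + (∑ j ∈ Finset.Icc 2 k, (j : ℝ) * ‖b j‖)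
        + (∑ j ∈ Finset.Icc 2 m, (j : ℝ) * ‖b (-(j : ℤ))‖)
        ≤ ‖b 1‖) :
    ∀ ζ₁ ζ₂ : ℂ, ‖ζ₁‖ = 1 → ‖ζ₂‖ = 1 →
      (∑ j ∈ Finset.Icc (-(m : ℤ)) (k : ℤ), b j * ζ₁ ^ j)
        = (∑ j ∈ Finset.Icc (-(m : ℤ)) (k : ℤ), b j * ζ₂ ^ j) →
      ζ₁ = ζ₂ := by
  intro ζ₁ ζ₂ h1 h2 hsum
  by_contra hne
  have hd : 0 < ‖ζ₁ - ζ₂‖ := norm_pos_iff.2 (sub_ne_zero.2 hne)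
  set S : Finset ℤ := Finset.Icc (-(m : ℤ)) (k : ℤ) with hS
  have h1S : (1 : ℤ) ∈ S := by
    rw [hS, Finset.mem_Icc]; omega
  have h0 : ∑ j ∈ S, b j * (ζ₁ ^ j - ζ₂ ^ j) = 0 := by
    simp only [mul_sub, Finset.sum_sub_distrib, hsum, sub_self]
  have hkey : b 1 * (ζ₁ ^ (1:ℤ) - ζ₂ ^ (1:ℤ)) = -∑ j ∈ S.erase 1, b j * (ζ₁ ^ j - ζ₂ ^ j) := by
    have h := Finset.add_sum_erase S (fun j => b j * (ζ₁ ^ j - ζ₂ ^ j)) h1S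
    rw [h0] at h
    linear_combination h
  rw [zpow_one, zpow_one] at hkey
  have hsum_lt : ‖b 1‖ * ‖ζ₁ - ζ₂‖
      < ∑ j ∈ S.erase 1, ((|j| : ℝ) * ‖b j‖) * ‖ζ₁ - ζ₂‖ := by
    have hle : ‖b 1‖ * ‖ζ₁ - ζ₂‖
        ≤ ∑ j ∈ S.erase 1, ‖b j * (ζ₁ ^ j - ζ₂ ^ j)‖ := by
      rw [← norm_mul, hkey, norm_neg]
      exact norm_sum_le _ _
    refine lt_of_le_of_lt hle ?_
    have hwit : ∃ j₀ ∈ S.erase 1, b j₀ ≠ 0 ∧ 2 ≤ |j₀| := by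
      by_cases hk2 : 2 ≤ k
      · exact ⟨(k : ℤ), by rw [Finset.mem_erase, hS, Finset.mem_Icc]; omega,
          fun h => hb (by rw [h, mul_zero]), by rw [Int.abs_natCast]; exact_mod_cast hk2⟩
      · have hm2 : 2 ≤ m := by omega
        exact ⟨-(m : ℤ), by rw [Finset.mem_erase, hS, Finset.mem_Icc]; omega,
          fun h => hb (by rw [h, zero_mul]),
          by simpa [Int.abs_natCast] using (by exact_mod_cast hm2 : (2:ℤ) ≤ (m:ℤ))⟩
    obtain ⟨j₀, hj₀S, hbj₀, hj₀2⟩ := hwit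
    refine Finset.sum_lt_sum (fun j hj => ?_) ⟨j₀, hj₀S, ?_⟩
    · rw [norm_mul]
      calc ‖b j‖ * ‖ζ₁ ^ j - ζ₂ ^ j‖
          ≤ ‖b j‖ * ((|j| : ℝ) * ‖ζ₁ - ζ₂‖) :=
            mul_le_mul_of_nonneg_left (aux_zpow_le ζ₁ ζ₂ h1 h2 j) (norm_nonneg _)
        _ = ((|j| : ℝ) * ‖b j‖) * ‖ζ₁ - ζ₂‖ := by ring
    · rw [norm_mul]
      calc ‖b j₀‖ * ‖ζ₁ ^ j₀ - ζ₂ ^ j₀‖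
          < ‖b j₀‖ * ((|j₀| : ℝ) * ‖ζ₁ - ζ₂‖) :=
            mul_lt_mul_of_pos_left (aux_zpow_lt ζ₁ ζ₂ h1 h2 hne j₀ hj₀2)
              (norm_pos_iff.2 hbj₀)
        _ = ((|j₀| : ℝ) * ‖b j₀‖) * ‖ζ₁ - ζ₂‖ := by ring
  have habs1 : ‖b 1‖ < ∑ j ∈ S.erase 1, (|j| : ℝ) * ‖b j‖ := by
    rw [← Finset.sum_mul] at hsum_lt
    exact lt_of_mul_lt_mul_right hsum_lt (norm_nonneg _)
  have hfinal : ∑ j ∈ S.erase 1, (|j| : ℝ) * ‖b j‖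
      = ‖b (-1)‖ + (∑ j ∈ Finset.Icc 2 k, (j : ℝ) * ‖b j‖)
        + (∑ j ∈ Finset.Icc 2 m, (j : ℝ) * ‖b (-(j : ℤ))‖) := by
    have e1 : S.erase 1 = Finset.Icc (-(m : ℤ)) 0 ∪ Finset.Icc 2 (k : ℤ) := by
      ext x
      simp only [hS, Finset.mem_erase, Finset.mem_Icc, Finset.mem_union]
      omega
    have hdisj : Disjoint (Finset.Icc (-(m : ℤ)) 0) (Finset.Icc 2 (k : ℤ)) := by
      rw [Finset.disjoint_left]
      intro x hx hx'
      simp only [Finset.mem_Icc] at hx hx'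
      omega
    have e2 : Finset.Icc (-(m : ℤ)) 0 = insert 0 (Finset.Icc (-(m : ℤ)) (-1)) := by
      ext x; simp only [Finset.mem_insert, Finset.mem_Icc]; omega
    have e3 : Finset.Icc (-(m : ℤ)) (-1) = (Finset.Icc (1 : ℤ) (m : ℤ)).image (fun x => -x) := by
      ext x
      simp only [Finset.mem_image, Finset.mem_Icc]
      constructor
      · intro hx; exact ⟨-x, by omega, by omega⟩
      · rintro ⟨a, ha, rfl⟩; omega
    have e4 : Finset.Icc (1 : ℤ) (m : ℤ) = insert 1 ((Finset.Icc 2 m).image (Nat.cast : ℕ → ℤ)) := by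
      ext x
      simp only [Finset.mem_insert, Finset.mem_image, Finset.mem_Icc]
      constructor
      · intro hx
        by_cases hx1 : x = 1
        · exact Or.inl hx1
        · exact Or.inr ⟨x.toNat, by omega, by omega⟩
      · rintro (rfl | ⟨a, ha, rfl⟩) <;> omega
    have e5 : Finset.Icc (2 : ℤ) (k : ℤ) = (Finset.Icc 2 k).image (Nat.cast : ℕ → ℤ) := by
      ext x
      simp only [Finset.mem_image, Finset.mem_Icc]
      constructor
      · intro hx; exact ⟨x.toNat, by omega, by omega⟩
      · rintro ⟨a, ha, rfl⟩; omega
    have hinj : ∀ x ∈ Finset.Icc 2 k, ∀ y ∈ Finset.Icc 2 k, (x : ℤ) = (y : ℤ) → x = y := by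
      intro x _ y _ h; exact_mod_cast h
    have hinj2 : ∀ x ∈ Finset.Icc 2 m, ∀ y ∈ Finset.Icc 2 m, (x : ℤ) = (y : ℤ) → x = y := by
      intro x _ y _ h; exact_mod_cast h
    have hinj3 : ∀ x ∈ Finset.Icc (1:ℤ) (m:ℤ), ∀ y ∈ Finset.Icc (1:ℤ) (m:ℤ), -x = -y → x = y := by
      intro x _ y _ h; omega
    rw [e1, Finset.sum_union hdisj, e2, Finset.sum_insert (by simp), e3,
      Finset.sum_image hinj3, e4, Finset.sum_insert (by simp), e5,
      Finset.sum_image hinj, Finset.sum_image hinj2]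
    simp only [abs_neg, abs_zero, abs_one, Int.cast_zero, Int.cast_one, Int.cast_neg,
      Int.cast_natCast, Nat.abs_cast]
    ring
  rw [hfinal] at habs1
  linarith
end

section
/- For q ≥ 2 the Laurent polynomial b₃(z) = z^{q+1} + 4z + z^{−q+1} satisfies b₃(e^{iθ}) = 2e^{iθ}(2 + cos(qθ)) for all real θ, and consequently b₃ is injective on the unit circle. -/
open Complex

lemma davies_formula (q : ℕ) (θ : ℝ) :
    Complex.exp (θ * I) ^ (q + 1) + 4 * Complex.exp (θ * I)
        + Complex.exp (θ * I) ^ ((1 : ℤ) - q)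
      = 2 * Complex.exp (θ * I) * (2 + Real.cos (q * θ)) := by
  have h1 : Complex.exp (θ * I) ^ (q + 1)
      = Complex.exp (θ * I) * Complex.exp ((q : ℝ) * θ * I) := by
    rw [pow_succ, ← Complex.exp_nat_mul]
    ring_nf
    rw [mul_comm]
    congr 1
    push_cast
    ring
  have h2 : Complex.exp (θ * I) ^ ((1 : ℤ) - q)
      = Complex.exp (θ * I) * Complex.exp (-((q : ℝ) * θ * I)) := by
    rw [← Complex.exp_int_mul, ← Complex.exp_add]
    congr 1
    push_cast
    ring
  rw [h1, h2]
  have hcos : (Real.cos ((q : ℝ) * θ) : ℂ)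
      = (Complex.exp ((q : ℝ) * θ * I) + Complex.exp (-((q : ℝ) * θ * I))) / 2 := by
    rw [Complex.ofReal_cos, Complex.cos]
    push_cast
    ring_nf
  rw [hcos]
  ring

/-- For `q ≥ 2`, `b₃(z) = z^{q+1} + 4z + z^{1−q}` satisfies
`b₃(e^{iθ}) = 2 e^{iθ}(2 + cos qθ)`, and `b₃` is injective on the unit circle. -/
theorem davies_example_jordan (q : ℕ) (hq : 2 ≤ q) :
    (∀ θ : ℝ, Complex.exp (θ * I) ^ (q + 1) + 4 * Complex.exp (θ * I)
        + Complex.exp (θ * I) ^ ((1 : ℤ) - q)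
      = 2 * Complex.exp (θ * I) * (2 + Real.cos (q * θ))) ∧
    Set.InjOn (fun z : ℂ => z ^ (q + 1) + 4 * z + z ^ ((1 : ℤ) - q))
      {z : ℂ | ‖z‖ = 1} := by
  refine ⟨fun θ => davies_formula q θ, ?_⟩
  intro z₁ hz₁ z₂ hz₂ h
  simp only [Set.mem_setOf_eq] at hz₁ hz₂
  obtain ⟨θ₁, rfl⟩ : ∃ θ : ℝ, z₁ = Complex.exp (θ * I) := by
    refine ⟨Complex.arg z₁, ?_⟩
    conv_lhs => rw [← Complex.norm_mul_exp_arg_mul_I z₁]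
    rw [hz₁, Complex.ofReal_one, one_mul]
  obtain ⟨θ₂, rfl⟩ : ∃ θ : ℝ, z₂ = Complex.exp (θ * I) := by
    refine ⟨Complex.arg z₂, ?_⟩
    conv_lhs => rw [← Complex.norm_mul_exp_arg_mul_I z₂]
    rw [hz₂, Complex.ofReal_one, one_mul]
  simp only [davies_formula] at h
  have habs1 : ‖Complex.exp (θ₁ * I)‖ = 1 := hz₁
  have habs2 : ‖Complex.exp (θ₂ * I)‖ = 1 := hz₂
  have hc1 : (0:ℝ) < 2 + Real.cos (q * θ₁) := by
    nlinarith [Real.neg_one_le_cos ((q:ℝ) * θ₁)]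
  have hc2 : (0:ℝ) < 2 + Real.cos (q * θ₂) := by
    nlinarith [Real.neg_one_le_cos ((q:ℝ) * θ₂)]
  have hab := congrArg (‖·‖) h
  simp only [norm_mul, habs1, habs2, Complex.norm_ofNat, mul_one, one_mul] at hab
  have h2c : ‖(2 + (Real.cos ((q:ℝ) * θ₁) : ℂ))‖
      = 2 + Real.cos ((q:ℝ) * θ₁) := by
    rw [show (2 + (Real.cos ((q:ℝ) * θ₁) : ℂ)) = ((2 + Real.cos ((q:ℝ) * θ₁) : ℝ) : ℂ) by
      push_cast; ring, Complex.norm_real, Real.norm_eq_abs, abs_of_pos hc1]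
  have h2c' : ‖(2 + (Real.cos ((q:ℝ) * θ₂) : ℂ))‖
      = 2 + Real.cos ((q:ℝ) * θ₂) := by
    rw [show (2 + (Real.cos ((q:ℝ) * θ₂) : ℂ)) = ((2 + Real.cos ((q:ℝ) * θ₂) : ℝ) : ℂ) by
      push_cast; ring, Complex.norm_real, Real.norm_eq_abs, abs_of_pos hc2]
  rw [h2c, h2c'] at hab
  have hcc : Real.cos ((q:ℝ) * θ₁) = Real.cos ((q:ℝ) * θ₂) := by linarith
  rw [hcc] at h
  have hne : (2 * (2 + (Real.cos ((q:ℝ) * θ₂) : ℂ))) ≠ 0 := by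
    intro h0
    have : (2 + (Real.cos ((q:ℝ) * θ₂) : ℂ)) = 0 := by
      rcases mul_eq_zero.mp h0 with h' | h'
      · norm_num at h'
      · exact h'
    have := congrArg (‖·‖) this
    rw [h2c'] at this
    simp at this
    linarith
  have : Complex.exp (θ₁ * I) = Complex.exp (θ₂ * I) := by
    have h' : (2 * (2 + (Real.cos ((q:ℝ) * θ₂) : ℂ))) * Complex.exp (θ₁ * I)
        = (2 * (2 + (Real.cos ((q:ℝ) * θ₂) : ℂ))) * Complex.exp (θ₂ * I) := by
      ring_nf at h ⊢
      linear_combination h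
    exact mul_left_cancel₀ hne h'
  exact this
end

section
/- Let b(z) = ∑_{j=−m}^{k} b_j z^j with b_{−m}b_k ≠ 0 and |w| > 2^{m+k}‖b‖_W where ‖b‖_W = ∑_j |b_j|. Then every root z₀ of P(z,w) = z^m(b(z) − w) lying outside the open unit disk satisfies |z₀| ≥ 2. -/
/-- For `|w| > 2^{m+k}‖b‖_W`, every root of `P(z,w) = z^m(b(z)−w)` in the closed
unit disk has modulus at most `1/2`. -/
theorem roots_large_for_large_w (m k : ℕ) (hm : 1 ≤ m) (hk : 1 ≤ k) (b : ℤ → ℂ)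
    (hb : b (-(m : ℤ)) * b k ≠ 0) (w : ℂ)
    (hw : 2 ^ (m + k) * (∑ j ∈ Finset.Icc (-(m : ℤ)) (k : ℤ), ‖b j‖)
      < ‖w‖)
    (z₀ : ℂ) (hz : 1 ≤ ‖z₀‖)
    (hroot : ∑ j ∈ Finset.Icc (-(m : ℤ)) (k : ℤ), b j * z₀ ^ ((m : ℤ) + j)
      = w * z₀ ^ m) :
    2 ≤ ‖z₀‖ := by
  by_contra h
  push_neg at h
  set a := ‖z₀‖ with ha_def
  have ha1 : (1:ℝ) ≤ a := hz
  have ha0 : (0:ℝ) ≤ a := by linarith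
  have key : ‖w‖ * a ^ m
      ≤ 2 ^ (m + k) * ∑ j ∈ Finset.Icc (-(m : ℤ)) (k : ℤ), ‖b j‖ := by
    have h1 : ‖w‖ * a ^ m
        = ‖∑ j ∈ Finset.Icc (-(m : ℤ)) (k : ℤ), b j * z₀ ^ ((m : ℤ) + j)‖ := by
      rw [hroot, norm_mul, norm_pow]
    rw [h1]
    calc ‖∑ j ∈ Finset.Icc (-(m : ℤ)) (k : ℤ), b j * z₀ ^ ((m : ℤ) + j)‖
        ≤ ∑ j ∈ Finset.Icc (-(m : ℤ)) (k : ℤ), ‖b j * z₀ ^ ((m : ℤ) + j)‖ :=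
          norm_sum_le _ _
      _ ≤ ∑ j ∈ Finset.Icc (-(m : ℤ)) (k : ℤ), ‖b j‖ * 2 ^ (m + k) := by
          refine Finset.sum_le_sum ?_
          intro j hj
          rw [Finset.mem_Icc] at hj
          rw [norm_mul, norm_zpow]
          refine mul_le_mul_of_nonneg_left ?_ (norm_nonneg _)
          calc a ^ ((m : ℤ) + j) ≤ a ^ ((m : ℤ) + k) :=
                zpow_le_zpow_right₀ ha1 (by linarith [hj.2])
            _ = a ^ (m + k) := by
                rw [show (m : ℤ) + k = ((m + k : ℕ) : ℤ) by push_cast; ring, zpow_natCast]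
            _ ≤ 2 ^ (m + k) := pow_le_pow_left₀ ha0 h.le _
      _ = 2 ^ (m + k) * ∑ j ∈ Finset.Icc (-(m : ℤ)) (k : ℤ), ‖b j‖ := by
          rw [← Finset.sum_mul]
          ring
  have hle : ‖w‖ ≤ ‖w‖ * a ^ m :=
    le_mul_of_one_le_right (norm_nonneg _) (one_le_pow₀ ha1)
  linarith
end

section
/- Let P(z) = ∑_{j=0}^{n} C(n,j) α_j z^j and Q(z) = ∑_{j=0}^{n} C(n,j) β_j z^j be complex polynomials of degree n ≥ 1 that are apolar, i.e., ∑_{j=0}^{n} (−1)^j C(n,j) α_j β_{n−j} = 0. If all roots of Q lie in a closed disk D, then P has at least one root in D. (Grace's theorem, closed-disk case.) -/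
open Finset Polynomial

lemma disk_inv {r d : ℝ} {a u : ℂ} (hr : 0 ≤ r) (ha : r < ‖a‖)
    (hd : d = ‖a‖ ^ 2 - r ^ 2) (hu : ‖u - a‖ ≤ r) :
    ‖u⁻¹ - (starRingEnd ℂ) a / (d : ℂ)‖ ≤ r / d := by
  have hd0 : 0 < d := by nlinarith
  have hu0 : u ≠ 0 := by
    intro h
    rw [h, zero_sub, norm_neg] at hu
    linarith
  have h1 : Complex.normSq (u - a) ≤ r ^ 2 := by
    rw [← Complex.sq_norm]
    nlinarith [norm_nonneg (u - a)]
  have h2 : r ^ 2 ≤ Complex.normSq a := by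
    rw [← Complex.sq_norm]; nlinarith
  have key : ‖(d : ℂ) - (starRingEnd ℂ) a * u‖ ≤ r * ‖u‖ := by
    have habs : ‖(d : ℂ) - (starRingEnd ℂ) a * u‖ ^ 2 ≤ (r * ‖u‖) ^ 2 := by
      rw [Complex.sq_norm, mul_pow, Complex.sq_norm u]
      have hA : ‖a‖ ^ 2 = a.re * a.re + a.im * a.im := by
        rw [Complex.sq_norm]; simp [Complex.normSq_apply]
      simp only [Complex.normSq_apply, Complex.sub_re, Complex.sub_im, Complex.mul_re,
        Complex.mul_im, Complex.conj_re, Complex.conj_im, Complex.ofReal_re,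
        Complex.ofReal_im, hd, hA] at h1 h2 ⊢
      nlinarith [mul_nonneg (sub_nonneg.2 h1) (sub_nonneg.2 h2), h1, h2]
    exact le_of_pow_le_pow_left₀ two_ne_zero (mul_nonneg hr (norm_nonneg u)) habs
  have hdC : (d : ℂ) ≠ 0 := by exact_mod_cast hd0.ne'
  have heq : u⁻¹ - (starRingEnd ℂ) a / (d : ℂ) = ((d : ℂ) - (starRingEnd ℂ) a * u) / (u * (d : ℂ)) := by
    field_simp
  rw [heq, norm_div]
  have hden : ‖u * (d : ℂ)‖ = ‖u‖ * d := by
    rw [norm_mul, Complex.norm_real, Real.norm_eq_abs, abs_of_pos hd0]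
  rw [hden]
  have hu0' : 0 < ‖u‖ := by
    rcases (norm_nonneg u).lt_or_eq with h | h
    · exact h
    · exact absurd (norm_eq_zero.mp h.symm) hu0
  rw [div_le_div_iff₀ (by positivity) hd0]
  calc ‖(d : ℂ) - (starRingEnd ℂ) a * u‖ * d ≤ r * ‖u‖ * d :=
        mul_le_mul_of_nonneg_right key hd0.le
    _ = r * (‖u‖ * d) := by ring

lemma msum_bound (s : Multiset ℂ) (f : ℂ → ℂ) (m : ℂ) (ρ : ℝ)
    (h : ∀ z ∈ s, ‖f z - m‖ ≤ ρ) :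
    ‖(s.map f).sum - (s.card : ℂ) * m‖ ≤ (s.card : ℝ) * ρ := by
  induction s using Multiset.induction_on with
  | empty => simp
  | cons a s ih =>
    have h1 := h a (Multiset.mem_cons_self a s)
    have h2 := ih fun z hz => h z (Multiset.mem_cons_of_mem hz)
    simp only [Multiset.map_cons, Multiset.sum_cons, Multiset.card_cons]
    have e1 : f a + (Multiset.map f s).sum - ((s.card + 1 : ℕ) : ℂ) * m
        = (f a - m) + ((Multiset.map f s).sum - (s.card : ℂ) * m) := by
      push_cast; ring
    rw [e1]
    calc ‖_‖ ≤ ‖f a - m‖ +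
          ‖(Multiset.map f s).sum - (s.card : ℂ) * m‖ := norm_add_le _ _
      _ ≤ ρ + (s.card : ℝ) * ρ := add_le_add h1 h2
      _ = ((s.card + 1 : ℕ) : ℝ) * ρ := by push_cast; ring

lemma eval_deriv_prod (s : Multiset ℂ) (w : ℂ) (h : ∀ z ∈ s, w - z ≠ 0) :
    eval w (derivative (s.map (fun z => X - Polynomial.C z)).prod) =
    eval w (s.map (fun z => X - Polynomial.C z)).prod * (s.map (fun z => (w - z)⁻¹)).sum := by
  induction s using Multiset.induction_on with
  | empty => simp
  | cons a s ih =>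
    have ha : w - a ≠ 0 := h a (Multiset.mem_cons_self a s)
    have ih' := ih fun z hz => h z (Multiset.mem_cons_of_mem hz)
    simp only [Multiset.map_cons, Multiset.prod_cons, Multiset.sum_cons, derivative_mul,
      derivative_sub, derivative_X, derivative_C, sub_zero, one_mul, eval_add, eval_mul,
      eval_sub, eval_X, eval_C]
    rw [ih']
    field_simp


lemma laguerre_step (n : ℕ) (β : ℕ → ℂ) (hβ : β (n+1) ≠ 0) (c ζ : ℂ) (r : ℝ) (hr : 0 ≤ r)
    (hQ : ∀ z : ℂ, (∑ j ∈ range (n+2), ((n+1).choose j : ℂ) * β j * z ^ j) = 0 →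
      ‖z - c‖ ≤ r)
    (hζ : r < ‖ζ - c‖) :
    β n + ζ * β (n+1) ≠ 0 ∧
    ∀ w : ℂ, (∑ j ∈ range (n+1), (n.choose j : ℂ) * (β j + ζ * β (j+1)) * w ^ j) = 0 →
      ‖w - c‖ ≤ r := by
  set A : ℕ → ℂ := fun j => ((n+1).choose j : ℂ) * β j with hA
  set q : Polynomial ℂ := ∑ j ∈ range (n+2), monomial j (A j) with hq
  have heval : ∀ z : ℂ, q.eval z = ∑ j ∈ range (n+2), A j * z ^ j := by
    intro z; rw [hq, eval_finset_sum]; simp [eval_monomial]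
  have hcoeff : ∀ k, q.coeff k = if k ∈ range (n+2) then A k else 0 := by
    intro k
    rw [hq, finset_sum_coeff]
    simp only [coeff_monomial]
    exact Finset.sum_ite_eq' (range (n+2)) k A
  have hcoefftop : q.coeff (n+1) = β (n+1) := by
    rw [hcoeff]; simp [hA]
  have hdeg : q.natDegree = n+1 := by
    refine le_antisymm ?_ (le_natDegree_of_ne_zero (by rw [hcoefftop]; exact hβ))
    rw [hq]
    refine natDegree_sum_le_of_forall_le _ _ fun j hj => ?_
    exact (natDegree_monomial_le _).trans (by simpa using Nat.lt_succ_iff.mp (mem_range.mp hj))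
  have hsplit : Splits q := IsAlgClosed.splits q
  have hcard : q.roots.card = n+1 := (splits_iff_card_roots.mp hsplit).trans hdeg
  have hroots : ∀ z ∈ q.roots, ‖z - c‖ ≤ r := by
    intro z hz
    exact hQ z (by rw [← heval]; exact isRoot_of_mem_roots hz)
  have hlead : q.leadingCoeff = β (n+1) := by rw [leadingCoeff, hdeg, hcoefftop]
  have hfact : q = Polynomial.C (β (n+1)) * (q.roots.map (fun z => X - Polynomial.C z)).prod := by
    conv_lhs => rw [(C_leadingCoeff_mul_prod_multiset_X_sub_C (splits_iff_card_roots.mp hsplit)).symm]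
    rw [hlead]
  have hNat : ((n+1:ℕ):ℂ) ≠ 0 := Nat.cast_ne_zero.mpr (Nat.succ_ne_zero n)
  have hvieta : ((n+1:ℕ):ℂ) * β n = β (n+1) * (-(q.roots.sum)) := by
    have h1 : q.coeff n = ((n+1:ℕ):ℂ) * β n := by
      rw [hcoeff]; simp [hA, Nat.choose_succ_self_right]
    have hprodDeg : ((q.roots.map (fun z => X - Polynomial.C z)).prod).natDegree = n+1 := by
      rw [natDegree_multiset_prod_X_sub_C_eq_card, hcard]
    have h2 : ((q.roots.map (fun z => X - Polynomial.C z)).prod).coeff n = -(q.roots.sum) := by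
      have h3 := multiset_prod_X_sub_C_nextCoeff q.roots
      rw [nextCoeff, hprodDeg] at h3
      simpa using h3
    have h3 : q.coeff n = β (n+1) * (-(q.roots.sum)) := by
      conv_lhs => rw [hfact]
      rw [coeff_C_mul, h2]
    rw [h1] at h3; exact h3
  constructor
  · intro h0
    have hζeq : ζ * ((n+1:ℕ):ℂ) = q.roots.sum := by
      have h5 : β (n+1) * (ζ * ((n+1:ℕ):ℂ)) = β (n+1) * q.roots.sum := by
        have h6 : ζ * β (n+1) = -β n := by linear_combination h0
        calc β (n+1) * (ζ * ((n+1:ℕ):ℂ)) = ((n+1:ℕ):ℂ) * (ζ * β (n+1)) := by ring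
          _ = ((n+1:ℕ):ℂ) * (-β n) := by rw [h6]
          _ = -(((n+1:ℕ):ℂ) * β n) := by ring
          _ = -(β (n+1) * (-(q.roots.sum))) := by rw [hvieta]
          _ = β (n+1) * q.roots.sum := by ring
      exact mul_left_cancel₀ hβ h5
    have hsum : ‖q.roots.sum - ((n+1:ℕ):ℂ) * c‖ ≤ ((n+1:ℕ):ℝ) * r := by
      have h7 := msum_bound q.roots id c r (by intro z hz; simpa using hroots z hz)
      rw [Multiset.map_id, hcard] at h7
      exact h7
    have h8 : ‖ζ - c‖ ≤ r := by
      have h9 : ζ - c = (q.roots.sum - ((n+1:ℕ):ℂ) * c) / ((n+1:ℕ):ℂ) := by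
        rw [eq_div_iff hNat]
        linear_combination hζeq
      rw [h9, norm_div, Complex.norm_natCast, div_le_iff₀ (by positivity)]
      calc ‖q.roots.sum - ((n+1:ℕ):ℂ) * c‖ ≤ ((n+1:ℕ):ℝ) * r := hsum
        _ = r * ((n+1:ℕ):ℝ) := by ring
    linarith
  · intro w hw
    by_contra hcon
    push_neg at hcon
    have hqw : q.eval w ≠ 0 := by
      intro h
      rw [heval] at h
      exact absurd (hQ w h) (not_le.mpr hcon)
    have hwz : ∀ z ∈ q.roots, w - z ≠ 0 := by
      intro z hz he
      have hz2 : w = z := by linear_combination he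
      exact absurd (hroots z hz) (not_le.mpr (hz2 ▸ hcon))
    have hq' : q.derivative.eval w = ∑ j ∈ range (n+2), A j * ((j:ℂ) * w ^ (j-1)) := by
      rw [hq, derivative_sum, eval_finset_sum]
      refine Finset.sum_congr rfl fun j hj => ?_
      rw [derivative_monomial, eval_monomial]
      ring
    have hpow : ∀ j : ℕ, (j:ℂ) * w ^ (j-1) * w = (j:ℂ) * w ^ j := by
      intro j
      cases j with
      | zero => simp
      | succ k => simp only [Nat.add_sub_cancel, pow_succ]; push_cast; ring
    have natlem : ∀ j : ℕ, (n+1).choose j * (n+1-j) = (n+1) * n.choose j := by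
      intro j
      rw [← Nat.choose_succ_right_eq, Nat.add_one_mul_choose_eq]
    have hkey : ((n+1:ℕ):ℂ) * (∑ j ∈ range (n+1), (n.choose j : ℂ) * (β j + ζ * β (j+1)) * w ^ j)
        = ((n+1:ℕ):ℂ) * q.eval w + (ζ - w) * q.derivative.eval w := by
      rw [heval, hq']
      have e1 : ∑ j ∈ range (n+2), A j * ((j:ℂ) * w ^ (j-1))
          = ∑ j ∈ range (n+1), ((n+1:ℕ):ℂ) * ((n.choose j : ℂ) * β (j+1)) * w ^ j := by
        rw [Finset.sum_range_succ']
        simp only [Nat.cast_zero, zero_mul, mul_zero, add_zero]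
        refine Finset.sum_congr rfl fun j hj => ?_
        have h := Nat.add_one_mul_choose_eq n j
        have hch : (((n+1).choose (j+1) : ℕ) : ℂ) * ((j+1 : ℕ) : ℂ)
            = ((n+1 : ℕ) : ℂ) * ((n.choose j : ℕ) : ℂ) := by
          exact_mod_cast congrArg (Nat.cast : ℕ → ℂ) h.symm
        simp only [hA, Nat.add_sub_cancel]
        push_cast at hch ⊢
        linear_combination (β (j+1) * w ^ j) * hch
      have e2 : ((n+1:ℕ):ℂ) * (∑ j ∈ range (n+2), A j * w ^ j)
            - w * (∑ j ∈ range (n+2), A j * ((j:ℂ) * w ^ (j-1)))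
          = ∑ j ∈ range (n+1), ((n+1:ℕ):ℂ) * ((n.choose j : ℂ) * β j) * w ^ j := by
        rw [Finset.mul_sum, Finset.mul_sum, ← Finset.sum_sub_distrib]
        have e3 : ∀ j ∈ range (n+2),
            ((n+1:ℕ):ℂ) * (A j * w ^ j) - w * (A j * ((j:ℂ) * w ^ (j-1)))
            = ((n+1:ℕ):ℂ) * ((n.choose j : ℂ) * β j) * w ^ j := by
          intro j hj
          have hj' : j ≤ n+1 := Nat.lt_succ_iff.mp (mem_range.mp hj)
          have hc : (((n+1).choose j : ℕ):ℂ) * (((n+1:ℕ):ℂ) - (j:ℂ))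
              = ((n+1:ℕ):ℂ) * ((n.choose j : ℕ):ℂ) := by
            have := congrArg (Nat.cast : ℕ → ℂ) (natlem j)
            push_cast [Nat.cast_sub hj'] at this
            push_cast
            linear_combination this
          have hp : w * (A j * ((j:ℂ) * w ^ (j-1))) = A j * ((j:ℂ) * w ^ j) := by
            rw [← hpow j]; ring
          rw [hp]
          simp only [hA]
          linear_combination (β j * w ^ j) * hc
        rw [Finset.sum_congr rfl e3, Finset.sum_range_succ]
        simp [Nat.choose_succ_self]
      calc ((n+1:ℕ):ℂ) * (∑ j ∈ range (n+1), (n.choose j : ℂ) * (β j + ζ * β (j+1)) * w ^ j)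
          = (∑ j ∈ range (n+1), ((n+1:ℕ):ℂ) * ((n.choose j : ℂ) * β j) * w ^ j)
            + ζ * (∑ j ∈ range (n+1), ((n+1:ℕ):ℂ) * ((n.choose j : ℂ) * β (j+1)) * w ^ j) := by
            rw [Finset.mul_sum, Finset.mul_sum, ← Finset.sum_add_distrib]
            exact Finset.sum_congr rfl fun j _ => by ring
        _ = (((n+1:ℕ):ℂ) * (∑ j ∈ range (n+2), A j * w ^ j)
              - w * (∑ j ∈ range (n+2), A j * ((j:ℂ) * w ^ (j-1))))
            + ζ * (∑ j ∈ range (n+2), A j * ((j:ℂ) * w ^ (j-1))) := by rw [e2, e1]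
        _ = ((n+1:ℕ):ℂ) * (∑ j ∈ range (n+2), A j * w ^ j)
            + (ζ - w) * (∑ j ∈ range (n+2), A j * ((j:ℂ) * w ^ (j-1))) := by ring
    have h10 : ((n+1:ℕ):ℂ) * q.eval w + (ζ - w) * q.derivative.eval w = 0 := by
      rw [← hkey, hw, mul_zero]
    set Sg := (q.roots.map (fun z => (w - z)⁻¹)).sum with hSg
    have h11 : q.derivative.eval w = q.eval w * Sg := by
      conv_lhs => rw [hfact]
      rw [derivative_C_mul, eval_mul, eval_C, eval_deriv_prod q.roots w hwz]
      conv_rhs => rw [hfact]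
      rw [eval_mul, eval_C]; ring
    have h12 : ((n+1:ℕ):ℂ) + (ζ - w) * Sg = 0 := by
      have h13 : q.eval w * (((n+1:ℕ):ℂ) + (ζ - w) * Sg) = 0 := by
        rw [h11] at h10; linear_combination h10
      rcases mul_eq_zero.mp h13 with h | h
      · exact absurd h hqw
      · exact h
    have hwζ : w - ζ ≠ 0 := by
      intro h
      apply hNat
      have h14 : (ζ - w) = 0 := by linear_combination -h
      rw [h14, zero_mul, add_zero] at h12
      exact h12
    have hinv : (w - ζ)⁻¹ = Sg / ((n+1:ℕ):ℂ) := by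
      have h14 : (w - ζ) * Sg = ((n+1:ℕ):ℂ) := by linear_combination -h12
      rw [eq_div_iff hNat, ← h14]
      rw [← mul_assoc, inv_mul_cancel₀ hwζ, one_mul]
    set a := w - c with haa
    have haabs : r < ‖a‖ := hcon
    set d := ‖a‖ ^ 2 - r ^ 2 with hdd
    have hd0 : 0 < d := by nlinarith
    set m := (starRingEnd ℂ) a / (d:ℂ) with hm
    have hball : ∀ z ∈ q.roots, ‖(w - z)⁻¹ - m‖ ≤ r / d := by
      intro z hz
      refine disk_inv hr haabs hdd ?_
      have he : (w - z) - a = -(z - c) := by rw [haa]; ring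
      rw [he, norm_neg]
      exact hroots z hz
    have hbound := msum_bound q.roots (fun z => (w - z)⁻¹) m (r/d) hball
    rw [hcard] at hbound
    have hbound2 : ‖(w - ζ)⁻¹ - m‖ ≤ r / d := by
      rw [hinv]
      have he : Sg / ((n+1:ℕ):ℂ) - m = (Sg - ((n+1:ℕ):ℂ) * m) / ((n+1:ℕ):ℂ) := by
        rw [sub_div, mul_div_cancel_left₀ _ hNat]
      rw [he, norm_div, Complex.norm_natCast, div_le_iff₀ (by positivity)]
      calc ‖Sg - ((n+1:ℕ):ℂ) * m‖ ≤ ((n+1:ℕ):ℝ) * (r/d) := hbound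
        _ = r / d * ((n+1:ℕ):ℝ) := by ring
    have hmabs : ‖m‖ = ‖a‖ / d := by
      rw [hm, norm_div, Complex.norm_real, Real.norm_eq_abs, abs_of_pos hd0, Complex.norm_conj]
    have hρm : r / d < ‖m‖ := by
      rw [hmabs]
      exact (div_lt_div_iff_of_pos_right hd0).mpr haabs
    have hd2 : (1:ℝ)/d = ‖m‖ ^ 2 - (r/d)^2 := by
      rw [hmabs, div_pow, div_pow, div_sub_div_same, ← hdd, pow_two, div_mul_eq_div_div,
        div_self hd0.ne']
    have hfinal := disk_inv (div_nonneg hr hd0.le) hρm hd2 hbound2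
    rw [inv_inv] at hfinal
    have hc1 : (starRingEnd ℂ) m / ((1/d : ℝ):ℂ) = a := by
      have hdC : (d:ℂ) ≠ 0 := Complex.ofReal_ne_zero.mpr hd0.ne'
      rw [hm, map_div₀, Complex.conj_conj, Complex.conj_ofReal]
      push_cast
      field_simp
    have hc2 : (r/d)/(1/d) = r := by field_simp
    rw [hc1, hc2] at hfinal
    have he2 : w - ζ - a = -(ζ - c) := by rw [haa]; ring
    rw [he2, norm_neg] at hfinal
    linarith


lemma grace_aux : ∀ n : ℕ, 1 ≤ n → ∀ α β : ℕ → ℂ, α n ≠ 0 → β n ≠ 0 →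
    (∑ j ∈ range (n + 1), (-1 : ℂ) ^ j * (n.choose j : ℂ) * α j * β (n - j) = 0) →
    ∀ (c : ℂ) (r : ℝ), 0 ≤ r →
    (∀ z : ℂ, (∑ j ∈ range (n + 1), (n.choose j : ℂ) * β j * z ^ j) = 0 →
      ‖z - c‖ ≤ r) →
    ∃ z : ℂ, (∑ j ∈ range (n + 1), (n.choose j : ℂ) * α j * z ^ j) = 0 ∧
      ‖z - c‖ ≤ r := by
  intro n
  induction n with
  | zero => intro h; omega
  | succ n ih =>
    intro _ α β hα hβ hapolar c r hr hQ
    rcases Nat.eq_zero_or_pos n with hn0 | hn1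
    · -- base case : degree 1
      subst hn0
      have hap : α 0 * β 1 - α 1 * β 0 = 0 := by
        have h := hapolar
        simp [Finset.sum_range_succ] at h
        linear_combination h
        
      refine ⟨-(β 0 / β 1), ?_, ?_⟩
      · simp only [Finset.sum_range_succ, Finset.sum_range_zero]
        simp [Nat.choose]
        field_simp
        linear_combination hap
      · apply hQ
        simp only [Finset.sum_range_succ, Finset.sum_range_zero]
        simp [Nat.choose]
        field_simp; ring
    · -- inductive step
      set a : ℕ → ℂ := fun j => ((n+1).choose j : ℂ) * α j with ha
      set p : Polynomial ℂ := ∑ j ∈ range (n+2), monomial j (a j) with hp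
      have heval : ∀ z : ℂ, p.eval z = ∑ j ∈ range (n+2), a j * z ^ j := by
        intro z; rw [hp, eval_finset_sum]; simp [eval_monomial]
      have hcoeff : ∀ k, p.coeff k = if k ∈ range (n+2) then a k else 0 := by
        intro k
        rw [hp, finset_sum_coeff]
        simp only [coeff_monomial]
        exact Finset.sum_ite_eq' (range (n+2)) k a
      have hcoefftop : p.coeff (n+1) = α (n+1) := by rw [hcoeff]; simp [ha]
      have hp0 : p ≠ 0 := by
        intro h
        rw [h, coeff_zero] at hcoefftop
        exact hα hcoefftop.symm
      have hdeg : p.natDegree = n+1 := by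
        refine le_antisymm ?_ (le_natDegree_of_ne_zero (by rw [hcoefftop]; exact hα))
        rw [hp]
        refine natDegree_sum_le_of_forall_le _ _ fun j hj => ?_
        exact (natDegree_monomial_le _).trans (by simpa using Nat.lt_succ_iff.mp (mem_range.mp hj))
      have hdegree : 0 < p.degree := by
        rw [degree_eq_natDegree hp0, hdeg]
        exact_mod_cast Nat.succ_pos n
      obtain ⟨ζ, hζroot⟩ := Complex.exists_root hdegree
      have hPζ : ∑ j ∈ range (n+2), a j * ζ ^ j = 0 := by rw [← heval]; exact hζroot
      by_cases hζD : ‖ζ - c‖ ≤ r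
      · exact ⟨ζ, by rw [← heval]; exact hζroot, hζD⟩
      push_neg at hζD
      obtain ⟨hlead', hQ'⟩ := laguerre_step n β hβ c ζ r hr hQ hζD
      -- coefficients of p / (X - ζ) and of the polar derivative of q
      set b : ℕ → ℂ := fun j => ∑ i ∈ Ico (j+1) (n+2), a i * ζ ^ (i-1-j) with hb
      set α' : ℕ → ℂ := fun j => b j / (n.choose j : ℂ) with hα'
      set β' : ℕ → ℂ := fun j => β j + ζ * β (j+1) with hβ'
      have hchoose : ∀ j, j ≤ n → ((n.choose j : ℕ) : ℂ) ≠ 0 :=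
        fun j hj => Nat.cast_ne_zero.mpr (Nat.choose_pos hj).ne'
      have hbc : ∀ j, j ≤ n → (n.choose j : ℂ) * α' j = b j := by
        intro j hj
        simp only [hα']
        rw [mul_comm]
        exact div_mul_cancel₀ _ (hchoose j hj)
      have hbr : ∀ j, j ≤ n+1 → b j = ∑ k ∈ range (n+1-j), a (j+1+k) * ζ ^ k := by
        intro j hj
        simp only [hb]
        rw [Finset.sum_Ico_eq_sum_range]
        have h1 : n+2-(j+1) = n+1-j := by omega
        rw [h1]
        refine Finset.sum_congr rfl fun k hk => ?_
        have h2 : j+1+k-1-j = k := by omega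
        rw [h2]
      have hbtop0 : b (n+2) = 0 := by
        simp only [hb]; simp
      have hbn : b (n+1) = 0 := by
        rw [hbr (n+1) (by omega)]
        simp
      have hbtop : b n = a (n+1) := by
        rw [hbr n (by omega)]
        simp
      have hα'top : α' n ≠ 0 := by
        simp only [hα']
        rw [hbtop]
        simp only [ha]
        simp only [Nat.choose_self, Nat.cast_one, div_one, one_mul]
        exact hα
      have hrel : ∀ j, j ≤ n → b j = a (j+1) + ζ * b (j+1) := by
        intro j hj
        rw [hbr j (by omega), hbr (j+1) (by omega)]
        have h1 : n+1-j = (n-j)+1 := by omega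
        have h2 : n+1-(j+1) = n-j := by omega
        rw [h1, h2, Finset.sum_range_succ', Finset.mul_sum]
        rw [add_comm]
        congr 1
        · simp
        · refine Finset.sum_congr rfl fun k hk => ?_
          have h3 : j+1+(k+1) = j+1+1+k := by omega
          rw [h3, pow_succ]
          ring
      have h00 : a 0 = -(ζ * b 0) := by
        have hb0 : ζ * b 0 = ∑ j ∈ range (n+1), a (j+1) * ζ ^ (j+1) := by
          rw [hbr 0 (by omega), Finset.mul_sum]
          simp only [Nat.sub_zero]
          refine Finset.sum_congr rfl fun k hk => ?_
          have h3 : 0+1+k = k+1 := by omega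
          rw [h3, pow_succ]
          ring
        have h4 := hPζ
        rw [Finset.sum_range_succ'] at h4
        simp only [pow_zero, mul_one] at h4
        rw [hb0]
        linear_combination h4
      -- new apolarity relation
      have e4 : ∑ j ∈ range (n+2), (-1:ℂ)^j * a j * β (n+1-j) = 0 := by
        rw [← hapolar]
        refine Finset.sum_congr rfl fun j hj => ?_
        simp only [ha]
        ring
      have e5 : ∑ j ∈ range (n+1), (-1:ℂ)^(j+1) * a (j+1) * β (n-j) + a 0 * β (n+1) = 0 := by
        have e5' : ∑ j ∈ range (n+2), (-1:ℂ)^j * a j * β (n+1-j)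
            = ∑ j ∈ range (n+1), (-1:ℂ)^(j+1) * a (j+1) * β (n-j) + a 0 * β (n+1) := by
          rw [Finset.sum_range_succ']
          congr 1
          · refine Finset.sum_congr rfl fun j hj => ?_
            have h5 : n+1-(j+1) = n-j := by omega
            rw [h5]
          · simp
        rw [← e5']
        exact e4
      have e6 : ∑ j ∈ range (n+1), (-1:ℂ)^(j+1) * (b j - ζ * b (j+1)) * β (n-j)
          - ζ * b 0 * β (n+1) = 0 := by
        have e6' : ∀ j ∈ range (n+1), (-1:ℂ)^(j+1) * (b j - ζ * b (j+1)) * β (n-j)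
            = (-1:ℂ)^(j+1) * a (j+1) * β (n-j) := by
          intro j hj
          have hj' : j ≤ n := Nat.lt_succ_iff.mp (mem_range.mp hj)
          rw [hrel j hj']
          ring
        rw [Finset.sum_congr rfl e6']
        linear_combination e5 - β (n+1) * h00
      have eA : ∑ j ∈ range (n+1), (-1:ℂ)^(j+1) * (b j - ζ * b (j+1)) * β (n-j)
          = -(∑ j ∈ range (n+1), (-1:ℂ)^j * b j * β (n-j))
            + ζ * (∑ j ∈ range (n+1), (-1:ℂ)^j * b (j+1) * β (n-j)) := by
        rw [Finset.mul_sum, ← Finset.sum_neg_distrib, ← Finset.sum_add_distrib]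
        exact Finset.sum_congr rfl fun j _ => by ring
      have eC : -(∑ j ∈ range (n+1), (-1:ℂ)^j * b j * β (n-j))
            + ζ * (∑ j ∈ range (n+1), (-1:ℂ)^j * b (j+1) * β (n-j))
            - ζ * b 0 * β (n+1) = 0 := by
        rw [← eA]
        exact e6
      have eB : (∑ j ∈ range (n+1), (-1:ℂ)^j * b j * β (n+1-j))
            + (∑ j ∈ range (n+1), (-1:ℂ)^j * b (j+1) * β (n-j))
          = b 0 * β (n+1) := by
        rw [Finset.sum_range_succ', Finset.sum_range_succ, hbn]
        have eB1 : ∀ j ∈ range n, (-1:ℂ)^(j+1) * b (j+1) * β (n+1-(j+1))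
            = -((-1:ℂ)^j * b (j+1) * β (n-j)) := by
          intro j hj
          have h5 : n+1-(j+1) = n-j := by omega
          rw [h5]
          ring
        rw [Finset.sum_congr rfl eB1]
        simp only [pow_zero, one_mul, Nat.sub_zero, mul_zero, zero_mul, add_zero]
        rw [Finset.sum_neg_distrib]
        ring
      have happ' : ∑ j ∈ range (n+1), (-1:ℂ)^j * (n.choose j : ℂ) * α' j * β' (n-j) = 0 := by
        have t1 : ∑ j ∈ range (n+1), (-1:ℂ)^j * (n.choose j : ℂ) * α' j * β' (n-j)
            = (∑ j ∈ range (n+1), (-1:ℂ)^j * b j * β (n-j))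
              + ζ * (∑ j ∈ range (n+1), (-1:ℂ)^j * b j * β (n+1-j)) := by
          rw [Finset.mul_sum, ← Finset.sum_add_distrib]
          refine Finset.sum_congr rfl fun j hj => ?_
          have hj' : j ≤ n := Nat.lt_succ_iff.mp (mem_range.mp hj)
          have h6 : (n-j)+1 = n+1-j := by omega
          simp only [hβ']
          rw [h6, ← hbc j hj']
          ring
        rw [t1]
        linear_combination ζ * eB - eC
      have hQ'' : ∀ w : ℂ, (∑ j ∈ range (n+1), (n.choose j : ℂ) * β' j * w ^ j) = 0 →
          ‖w - c‖ ≤ r := by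
        intro w hw
        exact hQ' w ((Finset.sum_congr rfl fun j _ => by simp only [hβ']).trans hw)
      obtain ⟨z, hz1, hz2⟩ := ih hn1 α' β' hα'top hlead' happ' c r hr hQ''
      refine ⟨z, ?_, hz2⟩
      have hz1' : ∑ j ∈ range (n+1), b j * z ^ j = 0 := by
        rw [← hz1]
        refine Finset.sum_congr rfl fun j hj => ?_
        rw [← hbc j (Nat.lt_succ_iff.mp (mem_range.mp hj))]
      have hfacteval : (∑ j ∈ range (n+1), b j * z ^ j) * (z - ζ)
          = ∑ j ∈ range (n+2), a j * z ^ j - ∑ j ∈ range (n+2), a j * ζ ^ j := by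
        calc (∑ j ∈ range (n+1), b j * z ^ j) * (z - ζ)
            = ∑ j ∈ range (n+1), ∑ i ∈ Ico (j+1) (n+2), a i * ζ ^ (i-1-j) * z ^ j * (z - ζ) := by
              rw [Finset.sum_mul]
              refine Finset.sum_congr rfl fun j hj => ?_
              simp only [hb]
              rw [Finset.sum_mul, Finset.sum_mul]
          _ = ∑ j ∈ range (n+2), ∑ i ∈ Ico (j+1) (n+2), a i * ζ ^ (i-1-j) * z ^ j * (z - ζ) := by
              conv_rhs => rw [Finset.sum_range_succ]
              simp [Finset.Ico_self]
          _ = ∑ i ∈ range (n+2), ∑ j ∈ range i, a i * ζ ^ (i-1-j) * z ^ j * (z - ζ) := by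
              rw [Finset.range_eq_Ico, Finset.sum_Ico_Ico_comm']; simp only [Finset.range_eq_Ico]
          _ = ∑ i ∈ range (n+2), a i * (z ^ i - ζ ^ i) := by
              refine Finset.sum_congr rfl fun i hi => ?_
              calc ∑ j ∈ range i, a i * ζ ^ (i-1-j) * z ^ j * (z - ζ)
                  = (∑ j ∈ range i, z ^ j * ζ ^ (i-1-j)) * (z - ζ) * a i := by
                    rw [Finset.sum_mul, Finset.sum_mul]
                    exact Finset.sum_congr rfl fun j _ => by ring
                _ = (z ^ i - ζ ^ i) * a i := by rw [geom_sum₂_mul]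
                _ = a i * (z ^ i - ζ ^ i) := by ring
          _ = ∑ j ∈ range (n+2), a j * z ^ j - ∑ j ∈ range (n+2), a j * ζ ^ j := by
              rw [← Finset.sum_sub_distrib]
              exact Finset.sum_congr rfl fun i _ => by ring
      have hPz : ∑ j ∈ range (n+2), a j * z ^ j = 0 := by
        rw [hz1', zero_mul, hPζ, sub_zero] at hfacteval
        exact hfacteval.symm
      rw [← hPz]



/-- Grace's theorem (closed-disk case): if `P` and `Q` are apolar polynomials of
degree `n ≥ 1` and all roots of `Q` lie in a closed disk `D`, then `P` has a root
in `D`. Polynomials are written in binomial form `∑ C(n,j) αⱼ zʲ`. -/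
theorem grace_theorem_disk (n : ℕ) (hn : 1 ≤ n) (α β : ℕ → ℂ)
    (hα : α n ≠ 0) (hβ : β n ≠ 0)
    (hapolar : ∑ j ∈ Finset.range (n + 1),
      (-1 : ℂ) ^ j * (n.choose j : ℂ) * α j * β (n - j) = 0)
    (c : ℂ) (r : ℝ) (hr : 0 ≤ r)
    (hQ : ∀ z : ℂ, (∑ j ∈ Finset.range (n + 1), (n.choose j : ℂ) * β j * z ^ j) = 0 →
      ‖z - c‖ ≤ r) :
    ∃ z : ℂ, (∑ j ∈ Finset.range (n + 1), (n.choose j : ℂ) * α j * z ^ j) = 0 ∧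
      ‖z - c‖ ≤ r := by
  exact grace_aux n hn α β hα hβ hapolar c r hr hQ
end

section
/- Let b(z) = b_{−1}z^{−1} + b_0 + b_1 z + … + b_k z^k with b_{−1} b_k ≠ 0, and suppose |b_{k−s}| > C(k+1, s)|b_{−1}| for some 0 ≤ s ≤ k−1. Then for every w ∈ ℂ, the polynomial P(z) = b_{−1} + (b_0 − w)z + b_1 z² + … + b_k z^{k+1} is apolar to Q(z) = z^{k+1} + C(k+1,s) a z^s, where a = (−1)^{k−s} b_{−1}/b_{k−s}, and every root of Q has modulus at most ρ = (C(k+1,s)|b_{−1}/b_{k−s}|)^{1/(k+1−s)} < 1. -/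
/-- For `b(z) = b₋₁z⁻¹ + b₀ + … + b_k z^k` with `|b_{k−s}| > C(k+1,s)|b₋₁|`:
for any `w`, the polynomial `P(z) = b₋₁ + (b₀−w)z + … + b_k z^{k+1}` is apolar to
`Q(z) = z^{k+1} + C(k+1,s) a z^s` with `a = (−1)^{k−s} b₋₁ / b_{k−s}`, all roots of
`Q` have modulus at most `ρ = (C(k+1,s)|b₋₁/b_{k−s}|)^{1/(k+1−s)}`, and `ρ < 1`.
(Apolarity of `∑ pⱼ zʲ`, `∑ qⱼ zʲ` of degree `n` reads `∑ (−1)ʲ pⱼ q_{n−j}/C(n,j) = 0`.) -/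
theorem regular_of_coeff_apolar (k s : ℕ) (hs : s < k) (bneg : ℂ) (b : ℕ → ℂ)
    (hbneg : bneg ≠ 0) (hbk : b k ≠ 0)
    (hcond : ((k + 1).choose s : ℝ) * ‖bneg‖ < ‖b (k - s)‖)
    (w : ℂ) :
    letI n := k + 1
    letI a : ℂ := (-1) ^ (k - s) * bneg / b (k - s)
    letI p : ℕ → ℂ := fun j => if j = 0 then bneg else if j = 1 then b 0 - w else b (j - 1)
    letI qc : ℕ → ℂ := fun j =>
      if j = k + 1 then 1 else if j = s then ((k + 1).choose s : ℂ) * a else 0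
    letI ρ : ℝ := (((k + 1).choose s : ℝ) * ‖bneg / b (k - s)‖)
      ^ ((1 : ℝ) / (k + 1 - s : ℕ))
    (∑ j ∈ Finset.range (n + 1), (-1 : ℂ) ^ j * p j * qc (n - j) / (n.choose j : ℂ) = 0) ∧
    (∀ z : ℂ, (∑ j ∈ Finset.range (n + 1), qc j * z ^ j) = 0 → ‖z‖ ≤ ρ) ∧
    ρ < 1 := by
  beta_reduce
  have hbks : b (k - s) ≠ 0 := by
    intro h
    rw [h] at hcond
    simp at hcond
    nlinarith [Nat.choose_pos (show s ≤ k+1 by omega), norm_pos_iff.mpr hbneg,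
      (Nat.one_le_cast (α := ℝ)).2 (Nat.choose_pos (show s ≤ k+1 by omega))]
  have hCpos : (0:ℝ) < ((k+1).choose s : ℝ) := by
    exact_mod_cast Nat.choose_pos (show s ≤ k+1 by omega)
  have hCne : ((k+1).choose s : ℂ) ≠ 0 := by
    exact_mod_cast Nat.choose_pos (show s ≤ k+1 by omega) |>.ne'
  have hm : k + 1 - s = (k - s) + 1 := by omega
  have hx : (0:ℝ) ≤ ((k + 1).choose s : ℝ) * ‖bneg / b (k - s)‖ :=
    mul_nonneg hCpos.le (norm_nonneg _)
  have hx1 : ((k + 1).choose s : ℝ) * ‖bneg / b (k - s)‖ < 1 := by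
    rw [norm_div]
    rw [← mul_div_assoc, div_lt_one (norm_pos_iff.mpr hbks)]
    exact hcond
  refine ⟨?_, ?_, ?_⟩
  · have hsub : ({0, k+1-s} : Finset ℕ) ⊆ Finset.range (k + 1 + 1) := by
      intro x hx
      simp only [Finset.mem_insert, Finset.mem_singleton] at hx
      simp only [Finset.mem_range]
      omega
    rw [← Finset.sum_subset hsub ?_]
    · rw [Finset.sum_pair (by omega : (0:ℕ) ≠ k+1-s)]
      have h1 : k + 1 - 0 = k + 1 := by omega
      have h2 : k + 1 - (k+1-s) = s := by omega
      rw [h1, h2]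
      simp only [if_pos rfl, if_neg (show k+1-s ≠ 0 by omega),
        if_neg (show k+1-s ≠ 1 by omega), if_neg (show s ≠ k+1 by omega), if_pos rfl]
      have h3 : k + 1 - s - 1 = k - s := by omega
      rw [h3, Nat.choose_zero_right]
      have h4 : (k+1).choose (k+1-s) = (k+1).choose s := by
        rw [← Nat.choose_symm (show s ≤ k+1 by omega)]
      rw [h4, hm]
      have hpow : ((-1:ℂ)) ^ (k-s) * (-1:ℂ) ^ (k-s) = 1 := by
        rw [← pow_add]
        exact Even.neg_one_pow ⟨k-s, rfl⟩
      field_simp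
      ring_nf
      have hpp : ((-1:ℂ))^((k-s)*2) = 1 := Even.neg_one_pow ⟨k-s, by ring⟩
      simp only [↓reduceIte]
      have hb1 : b (k-s) * (b (k-s))⁻¹ = 1 := mul_inv_cancel₀ hbks
      linear_combination (-(((1+k).choose s : ℂ) * bneg * ((-1:ℂ)^(k-s))^2)) * hb1 - (((1+k).choose s : ℂ) * bneg) * hpow
    · intro x hxr hxn
      simp only [Finset.mem_insert, Finset.mem_singleton, not_or] at hxn
      simp only [Finset.mem_range] at hxr
      rw [if_neg (show ¬ (k+1-x = k+1) by omega), if_neg (show ¬ (k+1-x = s) by omega)]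
      ring
  · intro z hz
    have hsub : ({s, k+1} : Finset ℕ) ⊆ Finset.range (k + 1 + 1) := by
      intro x hx
      simp only [Finset.mem_insert, Finset.mem_singleton] at hx
      simp only [Finset.mem_range]
      omega
    rw [← Finset.sum_subset hsub ?_] at hz
    · rw [Finset.sum_pair (by omega : s ≠ k+1)] at hz
      rw [if_neg (show s ≠ k+1 by omega), if_pos rfl, if_pos rfl] at hz
      -- hz : C*a * z^s + 1 * z^(k+1) = 0
      rcases eq_or_ne z 0 with rfl | hz0
      · simpa using Real.rpow_nonneg hx _
      · have hzz : z ^ (k+1-s) = -(((k + 1).choose s : ℂ) * ((-1) ^ (k - s) * bneg / b (k - s))) := by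
          have hsplit : z ^ (k+1) = z ^ s * z ^ (k+1-s) := by
            rw [← pow_add]
            congr 1
            omega
          rw [hsplit] at hz
          refine mul_left_cancel₀ (pow_ne_zero s hz0) ?_
          rw [mul_neg]
          linear_combination hz
        have habs : ‖z‖ ^ (k+1-s) =
            ((k + 1).choose s : ℝ) * ‖bneg / b (k - s)‖ := by
          rw [← norm_pow, hzz]
          simp only [norm_neg, norm_mul]
          rw [Complex.norm_natCast]
          congr 1
          rw [norm_div, norm_mul, norm_pow]
          simp [norm_div]
        rw [← habs]
        have : (‖z‖ ^ (k+1-s)) ^ ((1:ℝ) / (k+1-s : ℕ)) = ‖z‖ := by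
          rw [one_div, Real.pow_rpow_inv_natCast (norm_nonneg z) (by omega)]
        rw [this]
    · intro x hxr hxn
      simp only [Finset.mem_insert, Finset.mem_singleton, not_or] at hxn
      rw [if_neg hxn.2, if_neg hxn.1]
      ring
  · refine Real.rpow_lt_one hx hx1 ?_
    rw [one_div]
    have : (0:ℝ) < ((k+1-s : ℕ):ℝ) := by exact_mod_cast (show 0 < k+1-s by omega)
    positivity
end

section
/- Let b(t) = ∑_{j=−1}^{∞} b_j t^j be a continuous function on 𝕋 with b_{−1} ≠ 0 and ∑_j |b_j| < ∞, let w ∉ b(𝕋) with winding number of b − w around 0 equal to zero, and suppose P(z,w) = z(b(z)−w) has exactly one root ζ₀ in the open unit disk (simple, ζ₀ ≠ 0). Then the first Fourier coefficient a₁(w) = ∫_𝕋 (b(t)−w)⁻¹ t⁻¹ m(dt) of a = 1/(b−w) satisfies a₁(w) = 1/b_{−1} + 1/(ζ₀ P′(ζ₀, w)), where m is normalized Lebesgue measure on 𝕋. -/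
open Metric Complex

/-- Residue computation of the first Fourier coefficient of `a = 1/(b−w)`:
if `P(z,w) = z(b(z)−w)` has exactly one (simple, nonzero) root `ζ₀` in the open unit
disk and does not vanish on the unit circle, then
`a₁(w) = (2πi)⁻¹ ∮_{|ζ|=1} dζ/(ζ P(ζ,w)) = 1/b₋₁ + 1/(ζ₀ P'(ζ₀,w))`. -/
theorem first_fourier_coeff_residue (b : ℕ → ℂ) (bneg : ℂ) (hbneg : bneg ≠ 0)
    (hsum : Summable fun j : ℕ => ‖b j‖) (w : ℂ)
    (P : ℂ → ℂ) (hP : ∀ z : ℂ, P z = bneg + (∑' j : ℕ, b j * z ^ (j + 1)) - w * z)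
    (ζ₀ : ℂ) (hζ₀ : ‖ζ₀‖ < 1) (hζne : ζ₀ ≠ 0) (hroot : P ζ₀ = 0)
    (hsimple : deriv P ζ₀ ≠ 0)
    (huniq : ∀ z : ℂ, ‖z‖ < 1 → P z = 0 → z = ζ₀)
    (hcirc : ∀ z : ℂ, ‖z‖ = 1 → P z ≠ 0) :
    (1 / (2 * Real.pi * Complex.I)) * (∮ z in C(0, 1), (z * P z)⁻¹)
      = 1 / bneg + 1 / (ζ₀ * deriv P ζ₀) := by
  have hball : ζ₀ ∈ ball (0 : ℂ) 1 := by
    simpa [mem_ball, dist_zero_right] using hζ₀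
  have h0ball : (0 : ℂ) ∈ ball (0 : ℂ) 1 := by simp
  -- bound on the series terms
  have hbound : ∀ (j : ℕ) (x : ℂ), x ∈ closedBall (0 : ℂ) 1 →
      ‖b j * x ^ (j + 1)‖ ≤ ‖b j‖ := by
    intro j x hx
    rw [mem_closedBall, dist_zero_right] at hx
    rw [norm_mul, norm_pow]
    calc ‖b j‖ * ‖x‖ ^ (j + 1) ≤ ‖b j‖ * 1 := by
          exact mul_le_mul_of_nonneg_left (pow_le_one₀ (norm_nonneg x) hx) (norm_nonneg _)
      _ = ‖b j‖ := by simp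
  -- continuity of P on the closed ball
  have hPc : ContinuousOn P (closedBall (0 : ℂ) 1) := by
    have h1 : ContinuousOn (fun z : ℂ => ∑' j : ℕ, b j * z ^ (j + 1))
        (closedBall (0 : ℂ) 1) :=
      continuousOn_tsum (fun j => (continuous_const.mul (continuous_pow _)).continuousOn)
        hsum hbound
    have : ContinuousOn (fun z : ℂ => bneg + (∑' j : ℕ, b j * z ^ (j + 1)) - w * z)
        (closedBall (0 : ℂ) 1) :=
      ((continuousOn_const.add h1).sub (continuousOn_const.mul continuousOn_id))
    exact this.congr fun z _ => hP z
  -- differentiability of P on the open ball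
  have hPd : DifferentiableOn ℂ P (ball (0 : ℂ) 1) := by
    have h1 : DifferentiableOn ℂ (fun z : ℂ => ∑' j : ℕ, b j * z ^ (j + 1))
        (ball (0 : ℂ) 1) := by
      refine differentiableOn_tsum_of_summable_norm hsum
        (fun j => ((differentiable_const _).mul (differentiable_pow _)).differentiableOn)
        isOpen_ball (fun j x hx => hbound j x (ball_subset_closedBall hx))
    have : DifferentiableOn ℂ (fun z : ℂ => bneg + (∑' j : ℕ, b j * z ^ (j + 1)) - w * z)
        (ball (0 : ℂ) 1) :=
      ((differentiableOn_const _).add h1).sub ((differentiableOn_const _).mul differentiableOn_id)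
    exact this.congr fun z _ => hP z
  have hPat : DifferentiableAt ℂ P ζ₀ :=
    hPd.differentiableAt (isOpen_ball.mem_nhds hball)
  -- the cofactor k, with P z = (z - ζ₀) * k z
  set k : ℂ → ℂ := dslope P ζ₀ with hk_def
  have hfact : ∀ z : ℂ, P z = (z - ζ₀) * k z := by
    intro z
    have := sub_smul_dslope P ζ₀ z
    rw [hroot, sub_zero, smul_eq_mul] at this
    exact this.symm
  have hkζ : k ζ₀ = deriv P ζ₀ := dslope_same P ζ₀
  have hkd : DifferentiableOn ℂ k (ball (0 : ℂ) 1) :=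
    (Complex.differentiableOn_dslope (isOpen_ball.mem_nhds hball)).2 hPd
  have hkc : ContinuousOn k (closedBall (0 : ℂ) 1) := by
    refine (continuousOn_dslope ?_).2 ⟨hPc, hPat⟩
    exact mem_nhds_iff.2 ⟨ball (0 : ℂ) 1, ball_subset_closedBall, isOpen_ball, hball⟩
  -- k is nonvanishing on the closed ball
  have hk : ∀ z ∈ closedBall (0 : ℂ) 1, k z ≠ 0 := by
    intro z hz
    rcases eq_or_ne z ζ₀ with rfl | hne
    · rw [hkζ]; exact hsimple
    · have hPz : P z ≠ 0 := by
        rw [mem_closedBall, dist_zero_right] at hz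
        rcases lt_or_eq_of_le hz with h | h
        · exact fun h0 => hne (huniq z h h0)
        · exact hcirc z h
      intro h0
      exact hPz (by rw [hfact z, h0, mul_zero])
  -- the holomorphic function f = k⁻¹
  set f : ℂ → ℂ := fun z => (k z)⁻¹ with hf_def
  have hfd : DiffContOnCl ℂ f (ball (0 : ℂ) 1) := by
    constructor
    · exact hkd.inv fun z hz => hk z (ball_subset_closedBall hz)
    · rw [closure_ball (0 : ℂ) one_ne_zero]
      exact hkc.inv₀ hk
  -- Cauchy integral formula at ζ₀ and 0
  have hI1 : (∮ z in C(0, 1), (z - ζ₀)⁻¹ • f z) = (2 * Real.pi * Complex.I : ℂ) • f ζ₀ :=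
    hfd.circleIntegral_sub_inv_smul hball
  have hI0 : (∮ z in C(0, 1), (z - 0)⁻¹ • f z) = (2 * Real.pi * Complex.I : ℂ) • f 0 :=
    hfd.circleIntegral_sub_inv_smul h0ball
  -- the integrand splits into partial fractions on the circle
  have hcover : ∀ z ∈ Metric.sphere (0 : ℂ) 1, z ∈ closedBall (0 : ℂ) 1 :=
    fun z hz => sphere_subset_closedBall hz
  have hsub : ∀ z ∈ Metric.sphere (0 : ℂ) 1,
      (z * P z)⁻¹ = ζ₀⁻¹ • ((z - ζ₀)⁻¹ • f z) - ζ₀⁻¹ • ((z - 0)⁻¹ • f z) := by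
    intro z hz
    rw [mem_sphere_iff_norm, sub_zero] at hz
    have hzne : z ≠ 0 := fun h => by simp [h] at hz
    have hzζ : z - ζ₀ ≠ 0 := by
      rw [sub_ne_zero]
      intro h
      rw [h] at hz
      linarith
    have hkz : k z ≠ 0 := hk z (by simp [mem_closedBall, dist_zero_right, hz])
    rw [hfact z]
    simp only [smul_eq_mul, sub_zero, hf_def]
    field_simp
    ring
  -- circle integrability of the pieces
  have hcont_f : ContinuousOn f (Metric.sphere (0 : ℂ) 1) :=
    (hkc.inv₀ hk).mono sphere_subset_closedBall
  have hint1 : CircleIntegrable (fun z => ζ₀⁻¹ • ((z - ζ₀)⁻¹ • f z)) 0 1 := by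
    refine ContinuousOn.circleIntegrable zero_le_one ?_
    refine ContinuousOn.smul (f := fun _ => ζ₀⁻¹) (g := fun z => (z - ζ₀)⁻¹ • f z) continuousOn_const (ContinuousOn.smul (f := fun z => (z - ζ₀)⁻¹) ?_ hcont_f)
    refine ((continuous_id.sub continuous_const).continuousOn).inv₀ fun z hz => ?_
    rw [mem_sphere_iff_norm, sub_zero] at hz
    show z - ζ₀ ≠ 0
    rw [sub_ne_zero]
    intro h
    rw [h] at hz
    linarith
  have hint0 : CircleIntegrable (fun z => ζ₀⁻¹ • ((z - 0)⁻¹ • f z)) 0 1 := by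
    refine ContinuousOn.circleIntegrable zero_le_one ?_
    refine ContinuousOn.smul (f := fun _ => ζ₀⁻¹) (g := fun z => (z - 0)⁻¹ • f z) continuousOn_const (ContinuousOn.smul (f := fun z => (z - 0)⁻¹) ?_ hcont_f)
    refine ((continuous_id.sub continuous_const).continuousOn).inv₀ fun z hz => ?_
    rw [mem_sphere_iff_norm, sub_zero] at hz
    show z - 0 ≠ 0
    rw [sub_zero]
    exact fun h => by simp [h] at hz
  -- compute the integral
  have hsplit : (∮ z in C(0, 1), (z * P z)⁻¹)
      = ζ₀⁻¹ • (∮ z in C(0, 1), (z - ζ₀)⁻¹ • f z)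
        - ζ₀⁻¹ • (∮ z in C(0, 1), (z - 0)⁻¹ • f z) := by
    rw [← circleIntegral.integral_smul, ← circleIntegral.integral_smul,
      ← circleIntegral.integral_sub hint1 hint0]
    exact circleIntegral.integral_congr zero_le_one hsub
  -- value of P and k at 0
  have hP0 : P 0 = bneg := by
    rw [hP 0]
    simp
  have hk0 : k 0 = -(bneg / ζ₀) := by
    have := hfact 0
    rw [hP0, zero_sub] at this
    field_simp at this ⊢
    linear_combination this
  have hfζ : f ζ₀ = (deriv P ζ₀)⁻¹ := by rw [hf_def]; simp [hkζ]
  have hf0 : f 0 = -(ζ₀ / bneg) := by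
    rw [hf_def]; simp only [hk0, inv_neg, inv_div]
  have hπ : (2 * Real.pi * Complex.I : ℂ) ≠ 0 := by
    simp [Real.pi_ne_zero, Complex.I_ne_zero]
  rw [hsplit, hI1, hI0, hfζ, hf0]
  simp only [smul_eq_mul]
  field_simp
  ring
end
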